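/- Let S be a positively graded commutative ring such that every S_i is a finitely generated S₀-module, with S₀ Artinian, and let X be a finitely generated graded S-module such that X_j = 0 for all j greater than some integer J. Then each X_j has finite length over S₀, and the *length of X over S equals the sum over j of the S₀-lengths of the components X_j (in particular both are finite). -/

import Mathlib

open DirectSum

section
variable {A M : Type*} [CommRing A] [AddCommGroup M] [Module A M]

/-- The length of a module, as the supremum of lengths of strict chains of submodules. -/
noncomputable def moduleLength (R : Type*) [Ring R] (N : Type*) [AddCommGroup N]
    [Module R N] : ℕ∞ :=
  ⨆ (n : ℕ) (c : Fin (n + 1) → Submodule R N) (_ : StrictMono c), (n : ℕ∞)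

/-- A submodule of a graded module is graded if it is stable under taking homogeneous
components. -/
def IsGradedSubmodule (ℳ : ℤ → AddSubgroup M) [DirectSum.Decomposition ℳ]
    (N : Submodule A M) : Prop :=
  ∀ (i : ℤ) (m : M), m ∈ N → (DirectSum.decompose ℳ m i : M) ∈ N

/-- The *length of a graded module: the supremum of lengths of strict chains of graded
submodules. -/
noncomputable def starLength (A : Type*) [CommRing A] {M : Type*} [AddCommGroup M] [Module A M]
    (ℳ : ℤ → AddSubgroup M) [DirectSum.Decomposition ℳ] : ℕ∞ :=
  ⨆ (n : ℕ) (c : Fin (n + 1) → Submodule A M) (_ : StrictMono c)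
    (_ : ∀ i, IsGradedSubmodule ℳ (c i)), (n : ℕ∞)

variable (𝒜 : ℤ → AddSubgroup A) (ℳ : ℤ → AddSubgroup M)
variable [GradedRing 𝒜] [SetLike.GradedSMul 𝒜 ℳ]

/-- The degree-`j` component of a graded module is a module over the degree-zero subring. -/
noncomputable instance gradeZeroModule (j : ℤ) : Module (𝒜 0) (ℳ j) where
  smul a m := ⟨(a : A) • (m : M), by
    have h := SetLike.GradedSMul.smul_mem a.2 m.2
    rwa [show (0 : ℤ) +ᵥ j = j from zero_add j] at h⟩
  one_smul m := by
    ext; show ((1 : 𝒜 0) : A) • (m : M) = m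
    rw [SetLike.GradeZero.coe_one, one_smul]
  mul_smul a b m := by
    ext; show ((a * b : 𝒜 0) : A) • (m : M) = _
    rw [SetLike.GradeZero.coe_mul]; exact mul_smul _ _ _
  smul_zero a := by ext; exact smul_zero _
  smul_add a m n := by ext; exact smul_add _ _ _
  add_smul a b m := by
    ext; show ((a + b : 𝒜 0) : A) • (m : M) = _
    rw [AddMemClass.coe_add]; exact add_smul _ _ _
  zero_smul m := by ext; exact zero_smul A _


set_option maxHeartbeats 1000000

namespace StmtAux


section chains
variable {X : Type*} [Preorder X]

def ChainOn (c : ℕ → X) (n : ℕ) : Prop := ∀ i, i < n → c i < c (i + 1)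

lemma ChainOn.le {c : ℕ → X} {n : ℕ} (h : ChainOn c n) {i j : ℕ} (hij : i ≤ j) (hj : j ≤ n) :
    c i ≤ c j := by
  induction j with
  | zero => simp_all
  | succ k ih =>
    rcases Nat.lt_or_ge i (k+1) with hl | hl
    · exact (ih (Nat.lt_succ_iff.mp hl) (le_trans (Nat.le_succ k) hj)).trans
        (h k (Nat.lt_of_lt_of_le (Nat.lt_succ_self k) hj)).le
    · have : i = k + 1 := le_antisymm hij hl
      subst this; rfl

lemma ChainOn.lt {c : ℕ → X} {n : ℕ} (h : ChainOn c n) {i j : ℕ} (hij : i < j) (hj : j ≤ n) :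
    c i < c j :=
  lt_of_lt_of_le (h i (lt_of_lt_of_le hij hj)) (h.le hij hj)

/-- convert a ChainOn to a strictly monotone Fin-indexed chain -/
lemma ChainOn.strictMono_fin {c : ℕ → X} {n : ℕ} (h : ChainOn c n) :
    StrictMono (fun t : Fin (n+1) => c t.val) := by
  intro a b hab
  exact h.lt hab (Nat.lt_succ_iff.mp b.isLt)

lemma strictMono_fin_chainOn {n : ℕ} {c : Fin (n+1) → X} (h : StrictMono c) :
    ChainOn (fun i => c ⟨min i n, Nat.lt_succ_of_le (Nat.min_le_right _ _)⟩) n := by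
  intro i hi
  apply h
  simp only [Fin.mk_lt_mk]
  omega

end chains

section covbound
variable {X : Type*} [Lattice X] [IsModularLattice X]

lemma covchain_le {f : ℕ → X} : ∀ {L : ℕ}, (∀ i < L, f i ⋖ f (i + 1)) → f 0 ≤ f L := by
  intro L
  induction L with
  | zero => exact fun _ => le_rfl
  | succ L ihL =>
    intro hf
    exact (ihL (fun i hi => hf i (hi.trans (Nat.lt_succ_self _)))).trans
      (hf L (Nat.lt_succ_self _)).le

lemma covchain_bound : ∀ (L : ℕ), ∀ (f : ℕ → X), (∀ i < L, f i ⋖ f (i + 1)) →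
    ∀ (n : ℕ) (c : ℕ → X), ChainOn c n → f 0 ≤ c 0 → c n ≤ f L → n ≤ L := by
  intro L
  induction L with
  | zero =>
    intro f _ n c hc h0 hn
    by_contra hlt
    push_neg at hlt
    have : c 0 < c n := hc.lt hlt le_rfl
    exact absurd ((hn.trans h0).trans_lt this) (lt_irrefl _)
  | succ L ih =>
    intro f hf n c hc h0 hn
    rcases Nat.eq_zero_or_pos n with rfl | hnpos
    · exact Nat.zero_le _
    set K := f L with hK
    set b := f (L + 1) with hb
    have hcov : K ⋖ b := hf L (Nat.lt_succ_self L)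
    have hf0K : f 0 ≤ K := covchain_le (fun i hi => hf i (hi.trans (Nat.lt_succ_self _)))
    by_cases hcnK : c n ≤ K
    · have := ih f (fun i hi => hf i (hi.trans (Nat.lt_succ_self _))) n c hc h0 hcnK
      omega
    · -- m := least index with ¬ c m ≤ K
      have hex : ∃ m, ¬ c m ≤ K := ⟨n, hcnK⟩
      classical
      set m := Nat.find hex with hm
      have hmn : m ≤ n := by
        by_contra hmn
        push_neg at hmn
        exact Nat.find_min hex hmn hcnK
      have hmspec : ¬ c m ≤ K := Nat.find_spec hex
      have hlt_m : ∀ j, j < m → c j ≤ K := fun j hj => not_not.mp (Nat.find_min hex hj)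
      have hsup : ∀ j, m ≤ j → j ≤ n → c j ⊔ K = b := by
        intro j hmj hjn
        have hnotle : ¬ c j ≤ K := fun hle =>
          hmspec (((hc.le hmj hjn).trans hle))
        have h1 : K ≤ c j ⊔ K := le_sup_right
        have h2 : c j ⊔ K ≤ b := sup_le ((hc.le hjn le_rfl).trans hn) hcov.le
        rcases hcov.eq_or_eq h1 h2 with h | h
        · exact absurd (le_sup_left.trans h.le) hnotle
        · exact h
      -- new chain of length n - 1
      set g : ℕ → X := fun i => if i < m then c i else c (i + 1) ⊓ K with hg
      have hstep : ∀ {j}, m ≤ j → j + 1 ≤ n → c j ⊓ K < c (j+1) ⊓ K := by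
        intro j hmj hj
        refine inf_lt_inf_of_lt_of_sup_le_sup (hc j (by omega)) ?_
        rw [hsup j hmj (by omega), hsup (j+1) (by omega) hj]
      have hgchain : ChainOn g (n - 1) := by
        intro i hi
        by_cases h1 : i + 1 < m
        · simp only [hg, if_pos h1, if_pos (Nat.lt_of_succ_lt h1)]
          exact hc i (by omega)
        · by_cases h2 : i < m
          · -- i + 1 = m
            have him : i + 1 = m := by omega
            simp only [hg, if_pos h2, if_neg h1]
            -- c i < c (i + 2) ⊓ K
            have h3 : c i ≤ c (i+1) ⊓ K := le_inf (hc i (by omega)).le (hlt_m i h2)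
            have h4 : c (i+1) ⊓ K < c (i+2) ⊓ K := hstep (by omega) (by omega)
            exact lt_of_le_of_lt h3 h4
          · simp only [hg, if_neg h2, if_neg h1]
            exact hstep (by omega) (by omega)
      have hg0 : f 0 ≤ g 0 := by
        by_cases h0m : 0 < m
        · simpa [hg, h0m] using h0
        · have hm0 : m = 0 := by omega
          simp only [hg, if_neg (by omega : ¬ (0:ℕ) < m)]
          exact le_inf ((h0.trans (hc.le (Nat.zero_le 1) hnpos))) hf0K
      have hgn : g (n - 1) ≤ f L := by
        by_cases hnm : n - 1 < m
        · have : n = m := by omega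
          simp only [hg, if_pos hnm]
          exact hlt_m (n-1) hnm
        · simp only [hg, if_neg hnm]
          exact inf_le_right
      have := ih f (fun i hi => hf i (hi.trans (Nat.lt_succ_self _))) (n-1) g hgchain hg0 hgn
      omega

end covbound

section lengths
variable {R : Type*} [Ring R] {N : Type*} [AddCommGroup N] [Module R N]

lemma le_moduleLength {n : ℕ} {c : ℕ → Submodule R N} (h : ChainOn c n) :
    (n : ℕ∞) ≤ moduleLength R N := by
  refine le_iSup_of_le n (le_iSup_of_le (fun t : Fin (n+1) => c t.val) (le_iSup_of_le h.strictMono_fin le_rfl))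

lemma moduleLength_le {L : ℕ}
    (h : ∀ (n : ℕ) (c : ℕ → Submodule R N), ChainOn c n → n ≤ L) :
    moduleLength R N ≤ (L : ℕ∞) := by
  refine iSup_le fun n => iSup_le fun c => iSup_le fun hc => ?_
  exact_mod_cast h n _ (strictMono_fin_chainOn hc)

lemma moduleLength_ne_top [IsNoetherian R N] [IsArtinian R N] : moduleLength R N ≠ ⊤ := by
  obtain ⟨a, ha0, L, haL, hcov⟩ :=
    exists_covBy_seq_of_wellFoundedLT_wellFoundedGT (Submodule R N)
  have hle : moduleLength R N ≤ (L : ℕ∞) := by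
    apply moduleLength_le
    intro n c hc
    refine covchain_bound L a hcov n c hc ?_ ?_
    · rw [ha0.eq_bot]; exact bot_le
    · rw [haL.eq_top]; exact le_top
  exact fun htop => by simp [htop] at hle

lemma moduleLength_subsingleton [Subsingleton N] : moduleLength R N = 0 := by
  have hsub : Subsingleton (Submodule R N) := by
    constructor
    intro P Q
    ext x
    have : x = 0 := Subsingleton.elim x 0
    simp [this]
  refine le_antisymm ?_ zero_le
  apply moduleLength_le (L := 0)
  intro n c hc
  by_contra h
  exact absurd (Subsingleton.elim (c 0) (c 1)) (hc 0 (by omega)).ne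

/-- existence of a maximal chain from ⊥ to ⊤ realizing the length -/
lemma exists_top_chain (h : moduleLength R N ≠ ⊤) :
    ∃ (L : ℕ) (c : ℕ → Submodule R N), (L : ℕ∞) = moduleLength R N ∧ ChainOn c L ∧
      c 0 = ⊥ ∧ c L = ⊤ := by
  obtain ⟨L, hL⟩ := WithTop.ne_top_iff_exists.mp h
  -- get a chain of length exactly L
  have hchain : ∃ c : ℕ → Submodule R N, ChainOn c L := by
    rcases Nat.eq_zero_or_pos L with rfl | hpos
    · exact ⟨fun _ => ⊥, fun i hi => absurd hi (Nat.not_lt_zero i)⟩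
    · have hlt : ((L - 1 : ℕ) : ℕ∞) < moduleLength R N := by
        rw [← hL]
        exact_mod_cast Nat.cast_lt.mpr (Nat.sub_lt hpos Nat.one_pos)
      rw [moduleLength] at hlt
      rw [lt_iSup_iff] at hlt
      obtain ⟨n, hn⟩ := hlt
      rw [lt_iSup_iff] at hn
      obtain ⟨c, hc⟩ := hn
      rw [lt_iSup_iff] at hc
      obtain ⟨hsm, hlen⟩ := hc
      have hLn : L ≤ n := by
        have := Nat.cast_lt.mp hlen
        omega
      refine ⟨fun i => c ⟨min i L, by omega⟩, ?_⟩
      intro i hi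
      apply hsm
      simp only [Fin.mk_lt_mk]
      omega
  obtain ⟨c, hc⟩ := hchain
  -- c 0 must be ⊥
  have hbot : c 0 = ⊥ := by
    by_contra hne
    have : ChainOn (fun i => if i = 0 then ⊥ else c (i - 1)) (L + 1) := by
      intro i hi
      rcases Nat.eq_zero_or_pos i with rfl | hpos
      · simpa using Ne.bot_lt hne
      · simp only [if_neg (Nat.pos_iff_ne_zero.mp hpos), if_neg (by omega : ¬ i + 1 = 0)]
        have : i - 1 + 1 = i := by omega
        rw [← this] at hi ⊢
        exact hc _ (by omega)
    have hge := le_moduleLength this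
    rw [← hL] at hge
    have := Nat.cast_le.mp hge
    omega
  have htop : c L = ⊤ := by
    by_contra hne
    have : ChainOn (fun i => if i ≤ L then c i else ⊤) (L + 1) := by
      intro i hi
      by_cases h1 : i + 1 ≤ L
      · simp only [if_pos (by omega : i ≤ L), if_pos h1]
        exact hc i (by omega)
      · have hiL : i ≤ L := by omega
        simp only [if_pos hiL, if_neg h1]
        have : c i ≤ c L := hc.le hiL le_rfl
        exact lt_of_le_of_lt this (Ne.lt_top hne)
    have hge := le_moduleLength this
    rw [← hL] at hge
    have := Nat.cast_le.mp hge
    omega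
  exact ⟨L, c, hL ▸ rfl, hc, hbot, htop⟩

end lengths



/-- transfer Noetherianity along a quotient-ring action -/
lemma isNoetherian_of_quotient_action {R : Type*} [CommRing R] (I : Ideal R)
    (M : Type*) [AddCommGroup M] [Module R M] (hM : Module.IsTorsionBySet R M I) :
    ∀ (_ : @IsNoetherian (R ⧸ I) M _ _ (hM.module)), IsNoetherian R M := by
  letI := hM.module
  intro h
  have femb : Submodule R M ↪o Submodule (R ⧸ I) M := by
    refine OrderEmbedding.ofMapLEIff (fun N =>
      { carrier := N
        add_mem' := fun ha hb => N.add_mem ha hb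
        zero_mem' := N.zero_mem
        smul_mem' := ?_ }) ?_
    · intro c x hx
      obtain ⟨r, rfl⟩ := Ideal.Quotient.mk_surjective c
      show (Ideal.Quotient.mk I r) • x ∈ N
      rw [hM.mk_smul]
      exact N.smul_mem r hx
    · intro N N'
      constructor
      · intro hle x hx
        exact hle hx
      · intro hle x hx
        exact hle hx
  exact isNoetherian_mk ⟨femb.dual.wellFounded (isNoetherian_iff'.mp h).wf⟩

/-- Hopkins–Levitzki: an Artinian module over a commutative Artinian ring is Noetherian. -/
lemma isNoetherian_of_isArtinian {R : Type uu} [CommRing R] [IsArtinianRing R]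
    (M : Type vv) [AddCommGroup M] [Module R M] [IsArtinian R M] : IsNoetherian R M := by
  classical
  set J : Ideal R := Ideal.jacobson ⊥ with hJ
  obtain ⟨n₀, hn₀⟩ := IsArtinianRing.isNilpotent_jacobson_bot (R := R)
  -- R ⧸ J is semisimple
  have hrad : J.IsRadical := by
    have h1 : J = Ideal.radical ⊥ := by
      refine le_antisymm ?_ Ideal.radical_le_jacobson
      intro x hx
      have : x ^ n₀ ∈ J ^ n₀ := Ideal.pow_mem_pow hx n₀
      rw [hn₀] at this
      exact ⟨n₀, this⟩
    rw [h1]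
    exact Ideal.radical_isRadical ⊥
  haveI hred : IsReduced (R ⧸ J) := (Ideal.isRadical_iff_quotient_reduced J).mp hrad
  haveI hss : IsSemisimpleRing (R ⧸ J) := IsArtinianRing.isSemisimpleRing_of_isReduced (R ⧸ J)
  -- key : modules killed by J : Artinian → Noetherian
  have key : ∀ (K : Type vv) [AddCommGroup K] [Module R K], ∀ (_ : IsArtinian R K),
      (∀ r ∈ J, ∀ k : K, r • k = 0) → IsNoetherian R K := by
    intro K _ _ hart hkill
    have hTor : Module.IsTorsionBySet R K (J : Set R) := by
      intro x r
      exact hkill r.1 r.2 x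
    letI : Module (R ⧸ J) K := hTor.module
    haveI : IsScalarTower R (R ⧸ J) K := hTor.isScalarTower
    haveI : IsArtinian (R ⧸ J) K := isArtinian_of_tower R hart
    haveI : IsSemisimpleModule (R ⧸ J) K := inferInstance
    have hnoe : IsNoetherian (R ⧸ J) K := (IsSemisimpleModule.finite_tfae.out 2 1).mp ‹_›
    exact isNoetherian_of_quotient_action J K hTor hnoe
  -- induction on n : torsion by J^n implies Noetherian
  have aux : ∀ (n : ℕ) (K : Type vv) [AddCommGroup K] [Module R K], ∀ (_ : IsArtinian R K),
      (∀ r ∈ J ^ n, ∀ k : K, r • k = 0) → IsNoetherian R K := by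
    intro n
    induction n with
    | zero =>
      intro K _ _ _ hkill
      haveI : Subsingleton K := by
        refine subsingleton_of_forall_eq 0 fun x => ?_
        have h1 : (1 : R) ∈ J ^ 0 := by
          rw [pow_zero, Ideal.one_eq_top]
          trivial
        have := hkill 1 h1 x
        rwa [one_smul] at this
      haveI : Finite K := Finite.of_subsingleton
      infer_instance
    | succ n ih =>
      intro K _ _ hart hkill
      set P : Submodule R K := (J ^ n) • ⊤ with hP
      -- the submodule P is killed by J
      have hPkill : ∀ r ∈ J, ∀ k : P, r • k = 0 := by
        intro r hr k
        have hk : (k : K) ∈ (J ^ n) • (⊤ : Submodule R K) := k.2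
        have : r • (k : K) = 0 := by
          refine Submodule.smul_induction_on hk ?_ ?_
          · intro a ha m _
            rw [smul_smul]
            refine hkill (r * a) ?_ m
            rw [pow_succ']
            exact Ideal.mul_mem_mul hr ha
          · intro x y hx hy
            rw [smul_add, hx, hy, add_zero]
        exact Subtype.ext (by simpa using this)
      have hPnoe : IsNoetherian R P := key P inferInstance hPkill
      -- the quotient K ⧸ P is killed by J ^ n
      have hQkill : ∀ r ∈ J ^ n, ∀ k : K ⧸ P, r • k = 0 := by
        intro r hr k
        obtain ⟨x, rfl⟩ := Submodule.Quotient.mk_surjective P k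
        rw [← Submodule.Quotient.mk_smul, Submodule.Quotient.mk_eq_zero]
        exact Submodule.smul_mem_smul hr trivial
      have hQnoe : IsNoetherian R (K ⧸ P) := ih (K ⧸ P) inferInstance hQkill
      exact (isNoetherian_iff_submodule_quotient P).mpr ⟨hPnoe, hQnoe⟩
  refine aux n₀ M inferInstance ?_
  intro r hr k
  rw [hn₀] at hr
  rw [Ideal.mem_bot.mp hr, zero_smul]



section graded

lemma coe_smul_mk (j : ℤ) (a : 𝒜 0) (m : ℳ j) : ((a • m : ℳ j) : M) = (a : A) • (m : M) := rfl

variable [DirectSum.Decomposition ℳ]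

lemma decompose_smul_homog (a : A) {d : ℤ} {y : M} (hy : y ∈ ℳ d) (j : ℤ) :
    (DirectSum.decompose ℳ (a • y) j : M) = (DirectSum.decompose 𝒜 a (j - d) : A) • y := by
  induction a using DirectSum.Decomposition.inductionOn 𝒜 with
  | zero => simp
  | @homogeneous e ae =>
    have hmem : (ae : A) • y ∈ ℳ (e + d) := by
      have := SetLike.GradedSMul.smul_mem ae.2 hy
      rwa [vadd_eq_add] at this
    by_cases hje : j = e + d
    · subst hje
      rw [DirectSum.decompose_of_mem_same ℳ hmem]
      rw [show e + d - d = e by ring, DirectSum.decompose_of_mem_same 𝒜 ae.2]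
    · rw [DirectSum.decompose_of_mem_ne ℳ hmem (fun h => hje h.symm)]
      rw [DirectSum.decompose_of_mem_ne 𝒜 ae.2 (i := e) (j := j - d)
        (fun h => hje (by omega)), zero_smul]
  | add b c hb hc =>
    rw [add_smul, DirectSum.decompose_add, DirectSum.decompose_add]
    simp only [DirectSum.add_apply, AddSubgroup.coe_add]
    rw [hb, hc, add_smul]

/-- taking the `j`-th component, as an additive monoid hom `M →+ M` -/
@[simps] def componentHom (j : ℤ) : M →+ M where
  toFun x := (DirectSum.decompose ℳ x j : M)
  map_zero' := by simp
  map_add' x y := by simp [DirectSum.decompose_add, DirectSum.add_apply]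

lemma decompose_coe_sum {ι' : Type*} (s : Finset ι') (g : ι' → M) (j : ℤ) :
    (DirectSum.decompose ℳ (∑ i ∈ s, g i) j : M) =
      ∑ i ∈ s, (DirectSum.decompose ℳ (g i) j : M) :=
  map_sum (componentHom ℳ j) g s


lemma decompose_smul [∀ (i : ℤ) (x : ℳ i), Decidable (x ≠ 0)] (a : A) (m : M) (j : ℤ) :
    (DirectSum.decompose ℳ (a • m) j : M) =
      ∑ i ∈ (DirectSum.decompose ℳ m).support,
        (DirectSum.decompose 𝒜 a (j - i) : A) • (DirectSum.decompose ℳ m i : M) := by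
  conv_lhs => rw [← DirectSum.sum_support_decompose ℳ m, Finset.smul_sum, decompose_coe_sum]
  exact Finset.sum_congr rfl fun i _ => decompose_smul_homog 𝒜 ℳ a (DirectSum.decompose ℳ m i).2 j

/-- finite homogeneous generators -/
lemma exists_homog_gens [Module.Finite A M] :
    ∃ (t : Finset M) (D : M → ℤ), (∀ z ∈ t, z ∈ ℳ (D z)) ∧
      Submodule.span A (t : Set M) = ⊤ := by
  classical
  obtain ⟨s, hs⟩ : ∃ s : Finset M, Submodule.span A (s : Set M) = ⊤ :=
    Module.finite_def.mp ‹_›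
  set t : Finset M := s.biUnion
    (fun x => (DirectSum.decompose ℳ x).support.image
      (fun i => (DirectSum.decompose ℳ x i : M))) with ht
  have htmem : ∀ z ∈ t, ∃ d : ℤ, z ∈ ℳ d := by
    intro z hz
    rw [ht, Finset.mem_biUnion] at hz
    obtain ⟨x, _, hz⟩ := hz
    rw [Finset.mem_image] at hz
    obtain ⟨i, _, rfl⟩ := hz
    exact ⟨i, (DirectSum.decompose ℳ x i).2⟩
  refine ⟨t, fun z => if h : ∃ d : ℤ, z ∈ ℳ d then h.choose else 0, ?_, ?_⟩
  · intro z hz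
    have h := htmem z hz
    simp only [dif_pos h]
    exact h.choose_spec
  · refine le_antisymm le_top ?_
    rw [← hs]
    rw [Submodule.span_le]
    intro x hx
    have : x = ∑ i ∈ (DirectSum.decompose ℳ x).support, (DirectSum.decompose ℳ x i : M) :=
      (DirectSum.sum_support_decompose ℳ x).symm
    rw [this]
    refine Submodule.sum_mem _ fun i hi => Submodule.subset_span ?_
    rw [ht]
    simp only [Finset.coe_biUnion, Set.mem_iUnion, Finset.coe_image, Set.mem_image]
    exact ⟨x, hx, i, by simpa using hi, rfl⟩

variable {t : Finset M} {D : M → ℤ}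

/-- representation of homogeneous elements -/
lemma homog_rep (htD : ∀ z ∈ t, z ∈ ℳ (D z)) (hspan : Submodule.span A (t : Set M) = ⊤)
    {j : ℤ} {x : M} (hx : x ∈ ℳ j) :
    ∃ f : M → A, x = ∑ z ∈ t, (DirectSum.decompose 𝒜 (f z) (j - D z) : A) • z := by
  obtain ⟨f, -, hf⟩ := Submodule.mem_span_finset.mp (hspan ▸ Submodule.mem_top (x := x))
  refine ⟨f, ?_⟩
  conv_lhs => rw [← DirectSum.decompose_of_mem_same ℳ hx, ← hf]
  rw [decompose_coe_sum]
  exact Finset.sum_congr rfl fun z hz => decompose_smul_homog 𝒜 ℳ (f z) (htD z hz) j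

/-- multiplication by a homogeneous generator, as a linear map -/
noncomputable def mulGenMap (j d : ℤ) (z : M) (hz : z ∈ ℳ d) :
    𝒜 (j - d) →ₗ[𝒜 0] ℳ j where
  toFun a := ⟨(a : A) • z, by
    have := SetLike.GradedSMul.smul_mem a.2 hz
    rwa [vadd_eq_add, sub_add_cancel] at this⟩
  map_add' a b := by
    ext
    show ((a : A) + (b : A)) • z = _
    rw [add_smul]; rfl
  map_smul' s a := by
    ext
    show ((s : A) • (a : A)) • z = (s : A) • ((a : A) • z)
    rw [smul_smul]; rfl

@[simp] lemma mulGenMap_apply (j d : ℤ) (z : M) (hz : z ∈ ℳ d) (a : 𝒜 (j - d)) :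
    ((mulGenMap 𝒜 ℳ j d z hz a : ℳ j) : M) = (a : A) • z := rfl

lemma component_finite (hfg : ∀ i : ℤ, Module.Finite (𝒜 0) (𝒜 i))
    (htD : ∀ z ∈ t, z ∈ ℳ (D z)) (hspan : Submodule.span A (t : Set M) = ⊤) (j : ℤ) :
    Module.Finite (𝒜 0) (ℳ j) := by
  classical
  rw [Module.finite_def]
  have htop : (⊤ : Submodule (𝒜 0) (ℳ j)) =
      (t.attach.sup fun z => LinearMap.range (mulGenMap 𝒜 ℳ j (D z.1) z.1 (htD z.1 z.2))) := by
    refine le_antisymm ?_ le_top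
    intro x _
    obtain ⟨f, hf⟩ := homog_rep 𝒜 ℳ htD hspan x.2
    have hx : x = ∑ z ∈ t.attach,
        mulGenMap 𝒜 ℳ j (D z.1) z.1 (htD z.1 z.2)
          (DirectSum.decompose 𝒜 (f z.1) (j - D z.1)) := by
      apply Subtype.ext
      rw [AddSubgroup.val_finset_sum]
      simp only [mulGenMap_apply]
      rw [Finset.sum_attach t (fun z => (DirectSum.decompose 𝒜 (f z) (j - D z) : A) • z)]
      exact hf
    rw [hx]
    refine Submodule.sum_mem _ fun z _ => ?_
    refine Finset.le_sup
      (f := fun z => LinearMap.range (mulGenMap 𝒜 ℳ j (D z.1) z.1 (htD z.1 z.2)))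
      (Finset.mem_attach t z) ⟨_, rfl⟩
  rw [htop]
  refine Submodule.fg_finset_sup _ _ fun z _ => ?_
  have : Module.Finite (𝒜 0) (𝒜 (j - D z.1)) := hfg _
  rw [← Submodule.map_top]
  exact Submodule.FG.map _ (Module.finite_def.mp this)

lemma exists_low_bound (hpos : ∀ i : ℤ, i < 0 → ∀ a ∈ 𝒜 i, a = 0)
    (htD : ∀ z ∈ t, z ∈ ℳ (D z)) (hspan : Submodule.span A (t : Set M) = ⊤) :
    ∃ I : ℤ, ∀ j, j < I → ∀ x ∈ ℳ j, x = 0 := by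
  classical
  obtain ⟨I, hI⟩ : ∃ I : ℤ, ∀ z ∈ t, I ≤ D z := by
    rcases Finset.eq_empty_or_nonempty t with rfl | hne
    · exact ⟨0, by simp⟩
    · refine ⟨(t.image D).min' (hne.image D), fun z hz => ?_⟩
      exact Finset.min'_le _ _ (Finset.mem_image_of_mem D hz)
  refine ⟨I, fun j hj x hx => ?_⟩
  obtain ⟨f, hf⟩ := homog_rep 𝒜 ℳ htD hspan hx
  rw [hf]
  refine Finset.sum_eq_zero fun z hz => ?_
  have h0 : (DirectSum.decompose 𝒜 (f z) (j - D z) : A) = 0 :=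
    hpos _ (by have := hI z hz; omega) _ (DirectSum.decompose 𝒜 (f z) (j - D z)).2
  rw [h0, zero_smul]

section comps

/-- the degree-`j` part of a submodule, as a submodule over the degree-0 subring -/
def compSub (N : Submodule A M) (j : ℤ) : Submodule (𝒜 0) (ℳ j) where
  carrier := {x | (x : M) ∈ N}
  add_mem' := fun ha hb => N.add_mem ha hb
  zero_mem' := N.zero_mem
  smul_mem' := fun a x hx => by
    show ((a • x : ℳ j) : M) ∈ N
    rw [coe_smul_mk]
    exact N.smul_mem _ hx

lemma mem_compSub {N : Submodule A M} {j : ℤ} {x : ℳ j} :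
    x ∈ compSub 𝒜 ℳ N j ↔ (x : M) ∈ N := Iff.rfl

lemma compSub_mono {N N' : Submodule A M} (h : N ≤ N') (j : ℤ) :
    compSub 𝒜 ℳ N j ≤ compSub 𝒜 ℳ N' j := fun x hx => h hx

/-- a graded submodule is determined by its components -/
lemma graded_le_of_comps {N N' : Submodule A M} (hN : IsGradedSubmodule ℳ N)
    (h : ∀ j, compSub 𝒜 ℳ N j ≤ compSub 𝒜 ℳ N' j) : N ≤ N' := by
  classical
  intro m hm
  rw [← DirectSum.sum_support_decompose ℳ m]
  refine Submodule.sum_mem _ fun i _ => ?_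
  exact h i (x := DirectSum.decompose ℳ m i) (hN i m hm)

variable {𝒜} in
/-- the graded submodule attached to a degree `k` and a `𝒜 0`-submodule of `ℳ k`:
everything vanishing below degree `k` whose degree-`k` part lies in the given submodule. -/
def psi (hpos : ∀ i : ℤ, i < 0 → ∀ a ∈ 𝒜 i, a = 0)
    (k : ℤ) (N : Submodule (𝒜 0) (ℳ k)) : Submodule A M where
  carrier := {m | DirectSum.decompose ℳ m k ∈ N ∧ ∀ j < k, (DirectSum.decompose ℳ m j : M) = 0}
  zero_mem' := by
    constructor
    · rw [DirectSum.decompose_zero]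
      exact N.zero_mem
    · intro j _
      rw [DirectSum.decompose_zero]
      rfl
  add_mem' := by
    rintro x y ⟨hx1, hx2⟩ ⟨hy1, hy2⟩
    constructor
    · rw [DirectSum.decompose_add, DirectSum.add_apply]
      exact N.add_mem hx1 hy1
    · intro j hj
      rw [DirectSum.decompose_add, DirectSum.add_apply, AddSubgroup.coe_add, hx2 j hj,
        hy2 j hj, add_zero]
  smul_mem' := by
    classical
    rintro a m ⟨hm1, hm2⟩
    constructor
    · have hsum : (DirectSum.decompose ℳ (a • m) k : M) =
          (DirectSum.decompose 𝒜 a 0 : A) • (DirectSum.decompose ℳ m k : M) := by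
        rw [decompose_smul 𝒜 ℳ a m k]
        rw [Finset.sum_eq_single k]
        · rw [sub_self]
        · intro b _ hbk
          rcases lt_or_ge b k with hbk' | hbk'
          · rw [hm2 b hbk', smul_zero]
          · have h0 : (DirectSum.decompose 𝒜 a (k - b) : A) = 0 := by
              refine hpos _ ?_ _ (DirectSum.decompose 𝒜 a (k - b)).2
              omega
            rw [h0, zero_smul]
        · intro hk
          rw [DFinsupp.notMem_support_iff.mp hk]
          rw [ZeroMemClass.coe_zero, smul_zero]
      have heq : DirectSum.decompose ℳ (a • m) k =
          (DirectSum.decompose 𝒜 a 0) • (DirectSum.decompose ℳ m k) := by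
        apply Subtype.ext
        rw [hsum, coe_smul_mk]
      rw [heq]
      exact N.smul_mem _ hm1
    · intro j hj
      rw [decompose_smul 𝒜 ℳ a m j]
      refine Finset.sum_eq_zero fun i _ => ?_
      rcases lt_or_ge i k with hik | hik
      · rw [hm2 i hik, smul_zero]
      · have h0 : (DirectSum.decompose 𝒜 a (j - i) : A) = 0 := by
          refine hpos _ ?_ _ (DirectSum.decompose 𝒜 a (j - i)).2
          omega
        rw [h0, zero_smul]

variable {𝒜}
variable (hpos : ∀ i : ℤ, i < 0 → ∀ a ∈ 𝒜 i, a = 0)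

lemma mem_psi {k : ℤ} {N : Submodule (𝒜 0) (ℳ k)} {m : M} :
    m ∈ psi ℳ hpos k N ↔ DirectSum.decompose ℳ m k ∈ N ∧
      ∀ j < k, (DirectSum.decompose ℳ m j : M) = 0 := Iff.rfl

lemma psi_graded (k : ℤ) (N : Submodule (𝒜 0) (ℳ k)) :
    IsGradedSubmodule ℳ (psi ℳ hpos k N) := by
  intro i m hm
  obtain ⟨hm1, hm2⟩ := hm
  set x : M := (DirectSum.decompose ℳ m i : M) with hx
  have hxmem : x ∈ ℳ i := (DirectSum.decompose ℳ m i).2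
  constructor
  · rcases lt_trichotomy i k with h | h | h
    · have : x = 0 := hm2 i h
      rw [show DirectSum.decompose ℳ x k = 0 by rw [this, DirectSum.decompose_zero]; rfl]
      exact N.zero_mem
    · subst h
      have : DirectSum.decompose ℳ x i = DirectSum.decompose ℳ m i := by
        apply Subtype.ext
        rw [DirectSum.decompose_of_mem_same ℳ hxmem]
      rw [this]
      exact hm1
    · have : (DirectSum.decompose ℳ x k : M) = 0 :=
        DirectSum.decompose_of_mem_ne ℳ hxmem (by omega)
      rw [show DirectSum.decompose ℳ x k = 0 from Subtype.ext (by simpa using this)]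
      exact N.zero_mem
  · intro j hj
    rcases eq_or_ne i j with rfl | hij
    · rw [DirectSum.decompose_of_mem_same ℳ hxmem]
      exact hm2 i hj
    · exact DirectSum.decompose_of_mem_ne ℳ hxmem hij

lemma psi_mono {k : ℤ} {N N' : Submodule (𝒜 0) (ℳ k)} (h : N ≤ N') :
    psi ℳ hpos k N ≤ psi ℳ hpos k N' := by
  rintro m ⟨hm1, hm2⟩
  exact ⟨h hm1, hm2⟩

lemma coe_mem_psi {k : ℤ} {N : Submodule (𝒜 0) (ℳ k)} (x : ℳ k) (hx : x ∈ N) :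
    (x : M) ∈ psi ℳ hpos k N := by
  constructor
  · have : DirectSum.decompose ℳ (x : M) k = x :=
      Subtype.ext (DirectSum.decompose_of_mem_same ℳ x.2)
    rw [this]
    exact hx
  · intro j hj
    exact DirectSum.decompose_of_mem_ne ℳ x.2 (by omega)

lemma psi_lt_psi {k : ℤ} {N N' : Submodule (𝒜 0) (ℳ k)} (h : N < N') :
    psi ℳ hpos k N < psi ℳ hpos k N' := by
  rw [lt_iff_le_and_ne] at h ⊢
  refine ⟨psi_mono ℳ hpos h.1, fun heq => h.2 ?_⟩
  refine le_antisymm h.1 ?_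
  intro x hx
  have hmem : (x : M) ∈ psi ℳ hpos k N' := coe_mem_psi ℳ hpos x hx
  rw [← heq] at hmem
  obtain ⟨h1, _⟩ := hmem
  have : DirectSum.decompose ℳ (x : M) k = x :=
    Subtype.ext (DirectSum.decompose_of_mem_same ℳ x.2)
  rwa [this] at h1

lemma psi_bot_eq_top (k : ℤ) : psi ℳ hpos k ⊥ = psi ℳ hpos (k + 1) ⊤ := by
  ext m
  rw [mem_psi, mem_psi]
  constructor
  · rintro ⟨h1, h2⟩
    refine ⟨trivial, fun j hj => ?_⟩
    rcases eq_or_ne j k with rfl | hms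
    · have := (Submodule.mem_bot _).mp h1
      rw [this]
      rfl
    · exact h2 j (by omega)
  · rintro ⟨_, h2⟩
    refine ⟨?_, fun j hj => h2 j (by omega)⟩
    rw [Submodule.mem_bot]
    exact Subtype.ext (h2 k (by omega))
end comps

end graded


section counting

lemma count_chain {ι : Type*} [DecidableEq ι] (s : Finset ι) (X : ι → Type*)
    [∀ i, PartialOrder (X i)] {n : ℕ} (c : ℕ → ∀ i, X i)
    (hmono : ∀ t, t < n → ∀ i, c t i ≤ c (t + 1) i)
    (hstrict : ∀ t, t < n → ∃ i ∈ s, c t i < c (t + 1) i) :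
    ∃ m : ι → ℕ, n = ∑ i ∈ s, m i ∧ ∀ i ∈ s, ∃ e : ℕ → X i, ChainOn e (m i) := by
  classical
  have hle : ∀ (i : ι) (p q : ℕ), p ≤ q → q ≤ n → c p i ≤ c q i := by
    intro i p q hpq hq
    induction q with
    | zero =>
      have : p = 0 := by omega
      subst this; exact le_rfl
    | succ k ih =>
      rcases Nat.lt_or_ge p (k + 1) with h | h
      · exact (ih (by omega) (by omega)).trans (hmono k (by omega) i)
      · have : p = k + 1 := by omega
        subst this; exact le_rfl
  rcases Nat.eq_zero_or_pos n with rfl | hnpos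
  · exact ⟨fun _ => 0, by simp, fun i _ => ⟨fun _ => c 0 i, fun t ht => absurd ht (Nat.not_lt_zero t)⟩⟩
  choose coord hcoordmem hcoordlt using hstrict
  set cf : ℕ → ι := fun t => if h : t < n then coord t h else coord 0 hnpos with hcf
  refine ⟨fun i => ((Finset.range n).filter (fun t => cf t = i)).card, ?_, ?_⟩
  · have := Finset.card_eq_sum_card_fiberwise (s := Finset.range n) (t := s) (f := cf) ?_
    · simpa using this
    · intro t ht
      rw [Finset.mem_coe, Finset.mem_range] at ht
      simp only [hcf, dif_pos ht]
      exact hcoordmem t ht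
  · intro i _
    set F := (Finset.range n).filter (fun t => cf t = i) with hF
    set mi := F.card with hmi
    set iso := F.orderIsoOfFin (rfl : F.card = mi) with hiso
    refine ⟨fun r => if h : r < mi then c ((iso ⟨r, h⟩ : F) : ℕ) i else c n i, ?_⟩
    intro r hr
    simp only [dif_pos hr]
    set ar : ℕ := ((iso ⟨r, hr⟩ : F) : ℕ) with har
    have harF : ar ∈ F := (iso ⟨r, hr⟩).2
    have harn : ar < n := by
      have := (Finset.mem_filter.mp harF).1
      rwa [Finset.mem_range] at this
    have harc : cf ar = i := (Finset.mem_filter.mp harF).2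
    have hstep : c ar i < c (ar + 1) i := by
      have h1 := hcoordlt ar harn
      have h2 : coord ar harn = i := by
        rw [hcf] at harc
        simpa [dif_pos harn] using harc
      rwa [h2] at h1
    by_cases h2 : r + 1 < mi
    · simp only [dif_pos h2]
      rw [dif_pos hr]
      refine hstep.trans_le ?_
      set ar2 : ℕ := ((iso ⟨r + 1, h2⟩ : F) : ℕ) with har2
      have harlt : ar < ar2 := by
        have : (⟨r, hr⟩ : Fin mi) < ⟨r + 1, h2⟩ := by
          simp [Fin.mk_lt_mk]
        exact iso.strictMono this
      have har2n : ar2 < n := by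
        have := (Finset.mem_filter.mp (iso ⟨r + 1, h2⟩).2).1
        rwa [Finset.mem_range] at this
      exact hle i (ar + 1) ar2 (by omega) (by omega)
    · simp only [dif_neg h2]
      rw [dif_pos hr]
      exact hstep.trans_le (hle i (ar + 1) n (by omega) le_rfl)

end counting

section starlen
variable [DirectSum.Decomposition ℳ]

lemma le_starLength {n : ℕ} {c : ℕ → Submodule A M} (h : ChainOn c n)
    (hg : ∀ i, IsGradedSubmodule ℳ (c i)) : (n : ℕ∞) ≤ starLength A ℳ := by
  refine le_iSup_of_le n (le_iSup_of_le (fun t : Fin (n + 1) => c t.val)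
    (le_iSup_of_le h.strictMono_fin (le_iSup_of_le (fun i => hg i.val) le_rfl)))

lemma starLength_le {b : ℕ∞}
    (h : ∀ (n : ℕ) (c : ℕ → Submodule A M), ChainOn c n →
      (∀ i, IsGradedSubmodule ℳ (c i)) → (n : ℕ∞) ≤ b) :
    starLength A ℳ ≤ b := by
  refine iSup_le fun n => iSup_le fun c => iSup_le fun hc => iSup_le fun hgr => ?_
  exact h n _ (strictMono_fin_chainOn hc) (fun i => hgr _)

end starlen

end StmtAux

/-- Let `S` be a positively graded ring with `S₀` Artinian and each `S_i` finitely generated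
over `S₀`, and let `X` be a finitely generated graded `S`-module with `X_j = 0` for `j > J`.
Then each component `X_j` has finite length over `S₀`, and `*ℓ_S(X) = Σ_j ℓ_{S₀}(X_j)`. -/
theorem stmt_7 [DirectSum.Decomposition ℳ]
    (hpos : ∀ i : ℤ, i < 0 → ∀ a ∈ 𝒜 i, a = 0)
    [IsArtinianRing (𝒜 0)]
    (hfg : ∀ i : ℤ, Module.Finite (𝒜 0) (𝒜 i))
    [Module.Finite A M]
    (J : ℤ) (hJ : ∀ j : ℤ, J < j → ∀ x ∈ ℳ j, x = 0) :
    (∀ j : ℤ, moduleLength (𝒜 0) (ℳ j) ≠ ⊤) ∧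
      starLength A ℳ = ∑ᶠ j : ℤ, moduleLength (𝒜 0) (ℳ j) := by
  classical
  obtain ⟨t, D, htD, hspan⟩ := StmtAux.exists_homog_gens (A := A) ℳ
  obtain ⟨I₀, hlow₀⟩ := StmtAux.exists_low_bound 𝒜 ℳ hpos htD hspan
  set I : ℤ := min I₀ (J + 1) with hI
  have hlow : ∀ j, j < I → ∀ x ∈ ℳ j, x = 0 := fun j hj => hlow₀ j (by omega)
  have hIJ : I ≤ J + 1 := min_le_right _ _
  have hsub : ∀ j : ℤ, j ∉ Finset.Icc I J → Subsingleton (ℳ j) := by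
    intro j hj
    rw [Finset.mem_Icc] at hj
    push_neg at hj
    constructor
    intro a b
    apply Subtype.ext
    rcases lt_or_ge j I with h | h
    · rw [hlow j h a a.2, hlow j h b b.2]
    · have hJj : J < j := hj h
      rw [hJ j hJj a a.2, hJ j hJj b b.2]
  have hfinmod : ∀ j, Module.Finite (𝒜 0) (ℳ j) :=
    StmtAux.component_finite 𝒜 ℳ hfg htD hspan
  have hfin : ∀ j, moduleLength (𝒜 0) (ℳ j) ≠ ⊤ := by
    intro j
    haveI := hfinmod j
    haveI : IsArtinian (𝒜 0) (ℳ j) := inferInstance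
    haveI := StmtAux.isNoetherian_of_isArtinian (R := 𝒜 0) (ℳ j)
    exact StmtAux.moduleLength_ne_top
  refine ⟨hfin, ?_⟩
  have hsupp : (Function.support fun j => moduleLength (𝒜 0) (ℳ j)) ⊆ ↑(Finset.Icc I J) := by
    intro j hj
    by_contra hnot
    haveI := hsub j hnot
    exact hj StmtAux.moduleLength_subsingleton
  rw [finsum_eq_sum_of_support_subset _ hsupp]
  choose L E hLlen hEchain hEbot hEtop using fun j => StmtAux.exists_top_chain (hfin j)
  -- lower bound: construct a long graded chain
  have hge : (∑ j ∈ Finset.Icc I J, moduleLength (𝒜 0) (ℳ j)) ≤ starLength A ℳ := by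
    have hcast : (∑ j ∈ Finset.Icc I J, moduleLength (𝒜 0) (ℳ j)) =
        ((∑ j ∈ Finset.Icc I J, L j : ℕ) : ℕ∞) := by
      rw [Nat.cast_sum]
      exact Finset.sum_congr rfl fun j _ => (hLlen j).symm
    rw [hcast]
    set S : ℕ → ℕ := fun d => ∑ j ∈ Finset.Icc (J + 1 - (d : ℤ)) J, L j with hS
    have hSsucc : ∀ d : ℕ, S (d + 1) = L (J - (d : ℤ)) + S d := by
      intro d
      have h1 : J + 1 - ((d : ℕ) + 1 : ℤ) = J - (d : ℤ) := by ring
      have h2 : Finset.Icc (J - (d : ℤ)) J =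
          ((Finset.Icc (J + 1 - (d : ℤ)) J).cons (J - (d : ℤ)) (by
            simp only [Finset.mem_Icc]
            omega)) := by
        rw [Finset.cons_eq_insert]
        ext x
        simp only [Finset.mem_Icc, Finset.mem_insert]
        omega
      simp only [hS]
      push_cast
      rw [h1, h2, Finset.sum_cons]
    have build : ∀ d : ℕ, ∃ c : ℕ → Submodule A M,
        StmtAux.ChainOn c (S d) ∧
        (∀ i, IsGradedSubmodule ℳ (c i)) ∧
        c (S d) = StmtAux.psi ℳ hpos (J + 1 - (d : ℤ)) ⊤ := by
      intro d
      induction d with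
      | zero =>
        have hS0 : S 0 = 0 := by
          simp only [hS]
          rw [Finset.Icc_eq_empty (by omega), Finset.sum_empty]
        refine ⟨fun _ => StmtAux.psi ℳ hpos (J + 1) ⊤, ?_, ?_, ?_⟩
        · rw [hS0]
          intro i hi
          exact absurd hi (Nat.not_lt_zero i)
        · intro i
          exact StmtAux.psi_graded ℳ hpos _ _
        · rw [hS0, show (J + 1 - ((0 : ℕ) : ℤ)) = J + 1 by omega]
      | succ d ih =>
        obtain ⟨c, hc, hg, hctop⟩ := ih
        set k : ℤ := J - (d : ℤ) with hk
        have hk1 : J + 1 - ((d : ℕ) + 1 : ℤ) = k := by omega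
        have hSsucc' : S (d + 1) = L k + S d := by rw [hk]; exact hSsucc d
        have hcbot : c (S d) = StmtAux.psi ℳ hpos k (E k 0) := by
          rw [hctop, show J + 1 - (d : ℤ) = k + 1 by omega, ← StmtAux.psi_bot_eq_top ℳ hpos k,
            hEbot k]
        set c' : ℕ → Submodule A M :=
          fun i => if i ≤ S d then c i else StmtAux.psi ℳ hpos k (E k (i - S d)) with hc'
        have hc'hi : ∀ i, S d ≤ i → c' i = StmtAux.psi ℳ hpos k (E k (i - S d)) := by
          intro i h1
          by_cases hi : i ≤ S d
          · have : i = S d := le_antisymm hi h1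
            subst this
            simp only [hc', if_pos le_rfl, Nat.sub_self]
            exact hcbot
          · simp only [hc', if_neg hi]
        refine ⟨c', ?_, ?_, ?_⟩
        · intro i hi
          rw [hSsucc'] at hi
          by_cases h1 : i + 1 ≤ S d
          · simp only [hc', if_pos h1, if_pos (by omega : i ≤ S d)]
            exact hc i (by omega)
          · by_cases h2 : i < S d
            · omega
            · push_neg at h2
              rw [hc'hi i h2, hc'hi (i + 1) (by omega)]
              refine StmtAux.psi_lt_psi ℳ hpos ?_
              have := hEchain k (i - S d) (by omega)
              have harith : i + 1 - S d = (i - S d) + 1 := by omega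
              rwa [harith]
        · intro i
          by_cases h1 : i ≤ S d
          · simp only [hc', if_pos h1]
            exact hg i
          · simp only [hc', if_neg h1]
            exact StmtAux.psi_graded ℳ hpos _ _
        · rw [hSsucc']
          rw [hc'hi _ (by omega)]
          rw [show L k + S d - S d = L k by omega, hEtop k,
            show (J + 1 - ((d + 1 : ℕ) : ℤ)) = k by push_cast; omega]
    set d₀ : ℕ := (J + 1 - I).toNat with hd₀
    obtain ⟨c, hc, hg, _⟩ := build d₀
    have hd₀I : J + 1 - (d₀ : ℤ) = I := by
      have : ((J + 1 - I).toNat : ℤ) = J + 1 - I := Int.toNat_of_nonneg (by omega)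
      omega
    have : S d₀ = ∑ j ∈ Finset.Icc I J, L j := by
      simp only [hS, hd₀I]
    rw [← this]
    exact StmtAux.le_starLength ℳ hc hg
  -- upper bound
  have hle : starLength A ℳ ≤ ∑ j ∈ Finset.Icc I J, moduleLength (𝒜 0) (ℳ j) := by
    refine StmtAux.starLength_le ℳ ?_
    intro n c hc hgr
    obtain ⟨m, hmsum, hmchain⟩ := StmtAux.count_chain (Finset.Icc I J)
      (fun j => Submodule (𝒜 0) (ℳ j)) (fun s => fun j => StmtAux.compSub 𝒜 ℳ (c s) j)
      (fun s hs j => StmtAux.compSub_mono 𝒜 ℳ (hc s hs).le j)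
      (by
        intro s hs
        by_contra hno
        push_neg at hno
        have hle2 : c (s + 1) ≤ c s := by
          refine StmtAux.graded_le_of_comps 𝒜 ℳ (hgr (s + 1)) ?_
          intro j
          by_cases hj : j ∈ Finset.Icc I J
          · have h1 := StmtAux.compSub_mono 𝒜 ℳ (hc s hs).le j
            have h2 := hno j hj
            rw [lt_iff_le_not_ge] at h2
            push_neg at h2
            exact h2 h1
          · intro x _
            haveI := hsub j hj
            have hx0 : (x : M) = 0 := by
              rw [Subsingleton.elim x 0]
              rfl
            rw [StmtAux.mem_compSub, hx0]
            exact (c s).zero_mem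
        exact (hc s hs).not_ge hle2)
    rw [hmsum]
    rw [Nat.cast_sum]
    refine Finset.sum_le_sum fun j hj => ?_
    obtain ⟨e, he⟩ := hmchain j hj
    exact StmtAux.le_moduleLength he
  exact le_antisymm hle hge

end
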